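/- Let n be a natural number and let a_0 ≥ a_1 ≥ … ≥ a_n be positive real numbers. Define ε_n = ∫_0^∞ 2 cos(a_0 t) ∏_{k=0}^n sinc(a_k t) dt. Then ε_0 = π/(2·a_0), and more generally ε_n = π/(2·a_0) for every n such that ∑_{k=1}^n a_k ≤ 2·a_0. -/

import Mathlib

open MeasureTheory Filter Real Finset

noncomputable def sinc (t : ℝ) : ℝ := if t = 0 then 1 else Real.sin t / t

lemma sinc_zero : _root_.sinc 0 = 1 := if_pos rfl
lemma sinc_of_ne {t : ℝ} (ht : t ≠ 0) : _root_.sinc t = Real.sin t / t := if_neg ht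

lemma continuous_sinc : Continuous _root_.sinc := by
  rw [continuous_iff_continuousAt]
  intro x
  rcases eq_or_ne x 0 with rfl | hx
  · have h1 : Tendsto (slope Real.sin 0) (nhdsWithin 0 {0}ᶜ) (nhds 1) := by
      have := (Real.hasDerivAt_sin 0)
      rw [hasDerivAt_iff_tendsto_slope] at this
      simpa using this
    have h2 : Tendsto _root_.sinc (nhdsWithin 0 {0}ᶜ) (nhds 1) := by
      refine h1.congr' ?_
      filter_upwards [self_mem_nhdsWithin] with y hy
      simp only [Set.mem_compl_iff, Set.mem_singleton_iff] at hy
      simp [slope, sinc_of_ne hy, div_eq_inv_mul]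
    have : Tendsto _root_.sinc (nhds 0) (nhds 1) := by
      rw [← nhdsNE_sup_pure 0]
      refine h2.sup ?_
      rw [Filter.tendsto_pure_left]
      intro s hs
      exact mem_of_mem_nhds (by simpa [_root_.sinc_zero] using hs)
    simpa only [ContinuousAt, _root_.sinc_zero] using this
  · have : ContinuousAt (fun t => Real.sin t / t) x :=
      (Real.continuous_sin.continuousAt).div continuousAt_id hx
    refine this.congr ?_
    filter_upwards [isOpen_compl_singleton.mem_nhds hx] with y hy
    simp only [Set.mem_compl_iff, Set.mem_singleton_iff] at hy
    rw [sinc_of_ne hy]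

lemma abs_sinc_le_one (t : ℝ) : |_root_.sinc t| ≤ 1 := by
  rcases eq_or_ne t 0 with rfl | ht
  · simp [_root_.sinc_zero]
  · rw [sinc_of_ne ht, abs_div, div_le_one (abs_pos.2 ht)]
    exact Real.abs_sin_le_abs

lemma mul_sinc (x t : ℝ) (ht : t ≠ 0) : x * _root_.sinc (x * t) = Real.sin (x * t) / t := by
  rcases eq_or_ne x 0 with rfl | hx
  · simp
  · rw [sinc_of_ne (mul_ne_zero hx ht)]
    field_simp

lemma integral_exp_sin (s T : ℝ) :
    ∫ t in (0:ℝ)..T, Real.exp (-(s*t)) * Real.sin t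
      = (1 - Real.exp (-(s*T)) * (Real.cos T + s * Real.sin T)) / (1+s^2) := by
  have hd : ∀ t : ℝ, HasDerivAt (fun t => -(Real.exp (-(s*t)) * (Real.cos t + s * Real.sin t)) / (1+s^2))
      (Real.exp (-(s*t)) * Real.sin t) t := by
    intro t
    have h1 : HasDerivAt (fun t : ℝ => -(s*t)) (-s) t := by
      simpa using ((hasDerivAt_id t).const_mul (-s))
    have h2 : HasDerivAt (fun t : ℝ => Real.exp (-(s*t))) (Real.exp (-(s*t)) * (-s)) t := h1.exp
    have h3 : HasDerivAt (fun t : ℝ => Real.cos t + s * Real.sin t)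
        (-Real.sin t + s * Real.cos t) t :=
      (Real.hasDerivAt_cos t).add ((Real.hasDerivAt_sin t).const_mul s)
    have h4 := ((h2.mul h3).neg).div_const (1+s^2)
    refine h4.congr_deriv ?_
    have hs : (1:ℝ) + s^2 ≠ 0 := by positivity
    rw [div_eq_iff hs]
    ring
  rw [intervalIntegral.integral_eq_sub_of_hasDerivAt (fun t _ => hd t)
    (((Real.continuous_exp.comp (by continuity)).mul Real.continuous_sin).intervalIntegrable 0 T)]
  have hs : (1:ℝ) + s^2 ≠ 0 := by positivity
  field_simp
  simp only [mul_zero, neg_zero, Real.exp_zero, Real.cos_zero, Real.sin_zero]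
  ring

lemma integral_exp_neg_mul_Ioi {t : ℝ} (ht : 0 < t) :
    ∫ s in Set.Ioi (0:ℝ), Real.exp (-(t*s)) = 1/t := by
  have := integral_comp_mul_left_Ioi (fun x => Real.exp (-x)) 0 ht
  simp only [mul_zero] at this
  rw [this, integral_exp_neg_Ioi_zero]
  simp [one_div]

lemma Si_eq {T : ℝ} (hT : 0 ≤ T) :
    (∫ t in (0:ℝ)..T, _root_.sinc t)
      = ∫ s in Set.Ioi (0:ℝ),
          (1 - Real.exp (-(s*T)) * (Real.cos T + s * Real.sin T)) / (1+s^2) := by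
  have hmeas : AEStronglyMeasurable
      (Function.uncurry fun (t s : ℝ) => Real.exp (-(s*t)) * Real.sin t)
      ((volume.restrict (Set.Ioc (0:ℝ) T)).prod (volume.restrict (Set.Ioi (0:ℝ)))) := by
    apply Continuous.aestronglyMeasurable
    apply Continuous.mul
    · exact Real.continuous_exp.comp (by continuity)
    · exact Real.continuous_sin.comp continuous_fst
  have hint : Integrable (Function.uncurry fun (t s : ℝ) => Real.exp (-(s*t)) * Real.sin t)
      ((volume.restrict (Set.Ioc (0:ℝ) T)).prod (volume.restrict (Set.Ioi (0:ℝ)))) := by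
    rw [integrable_prod_iff hmeas]
    constructor
    · rw [ae_restrict_iff' measurableSet_Ioc]
      refine Eventually.of_forall fun t ht => ?_
      have ht0 : 0 < t := ht.1
      have h1 : Integrable (fun s => Real.exp (-(t*s))) (volume.restrict (Set.Ioi (0:ℝ))) := by
        simpa [neg_mul, IntegrableOn] using exp_neg_integrableOn_Ioi 0 ht0
      refine (h1.mul_const (Real.sin t)).congr (Eventually.of_forall fun s => ?_)
      simp [mul_comm t s]
    · have hb : ∀ᵐ t ∂(volume.restrict (Set.Ioc (0:ℝ) T)),
          ‖∫ s in Set.Ioi (0:ℝ), ‖Real.exp (-(s*t)) * Real.sin t‖‖ ≤ 1 := by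
        rw [ae_restrict_iff' measurableSet_Ioc]
        refine Eventually.of_forall fun t ht => ?_
        have ht0 : 0 < t := ht.1
        have heq : ∀ s : ℝ, ‖Real.exp (-(s*t)) * Real.sin t‖
            = Real.exp (-(t*s)) * |Real.sin t| := by
          intro s
          rw [norm_mul, Real.norm_eq_abs, Real.norm_eq_abs, Real.abs_exp, mul_comm s t]
        simp only [heq]
        rw [integral_mul_const, integral_exp_neg_mul_Ioi ht0, Real.norm_eq_abs, abs_mul,
          abs_abs, abs_of_pos (by positivity : (0:ℝ) < 1/t)]
        rw [one_div, ← div_eq_inv_mul, div_le_one ht0]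
        calc |Real.sin t| ≤ |t| := Real.abs_sin_le_abs
          _ = t := abs_of_pos ht0
      refine (integrable_const (1:ℝ)).mono' ?_ hb
      exact (hmeas.norm.integral_prod_right').congr (Eventually.of_forall fun t => rfl)
  calc (∫ t in (0:ℝ)..T, _root_.sinc t)
      = ∫ t in Set.Ioc (0:ℝ) T, _root_.sinc t := intervalIntegral.integral_of_le hT
    _ = ∫ t in Set.Ioc (0:ℝ) T, ∫ s in Set.Ioi (0:ℝ), Real.exp (-(s*t)) * Real.sin t := by
        refine setIntegral_congr_fun measurableSet_Ioc fun t ht => ?_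
        have ht0 : 0 < t := ht.1
        have : ∀ s : ℝ, Real.exp (-(s*t)) * Real.sin t = Real.exp (-(t*s)) * Real.sin t := by
          intro s; rw [mul_comm s t]
        simp only [this]
        rw [integral_mul_const, integral_exp_neg_mul_Ioi ht0, sinc_of_ne ht0.ne']
        rw [one_div, inv_mul_eq_div]
    _ = ∫ s in Set.Ioi (0:ℝ), ∫ t in Set.Ioc (0:ℝ) T, Real.exp (-(s*t)) * Real.sin t :=
        integral_integral_swap hint
    _ = ∫ s in Set.Ioi (0:ℝ),
          (1 - Real.exp (-(s*T)) * (Real.cos T + s * Real.sin T)) / (1+s^2) := by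
        refine setIntegral_congr_fun measurableSet_Ioi fun s _ => ?_
        rw [← intervalIntegral.integral_of_le hT, integral_exp_sin]

lemma Si_tendsto :
    Tendsto (fun T => ∫ t in (0:ℝ)..T, _root_.sinc t) atTop (nhds (π/2)) := by
  set E : ℝ → ℝ := fun T => ∫ s in Set.Ioi (0:ℝ),
    Real.exp (-(s*T)) * (Real.cos T + s * Real.sin T) / (1+s^2) with hE
  have hbound : ∀ T : ℝ, 0 < T → ∀ s : ℝ, s ∈ Set.Ioi (0:ℝ) →
      ‖Real.exp (-(s*T)) * (Real.cos T + s * Real.sin T) / (1+s^2)‖ ≤ 2 * Real.exp (-(T*s)) := by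
    intro T hT s hs
    have hs0 : (0:ℝ) < s := hs
    have h1 : |Real.cos T + s * Real.sin T| ≤ 1 + s := by
      calc |Real.cos T + s * Real.sin T| ≤ |Real.cos T| + |s * Real.sin T| := abs_add_le _ _
        _ ≤ 1 + s := by
            have := Real.abs_cos_le_one T
            have h2 : |s * Real.sin T| ≤ s := by
              rw [abs_mul, abs_of_pos hs0]
              nlinarith [Real.abs_sin_le_one T, hs0.le]
            linarith
    have h3 : (1:ℝ) + s ≤ 2 * (1 + s^2) := by nlinarith
    rw [Real.norm_eq_abs, abs_div, abs_mul, Real.abs_exp,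
      abs_of_pos (by positivity : (0:ℝ) < 1 + s^2), div_le_iff₀ (by positivity)]
    rw [mul_comm s T]
    calc Real.exp (-(T*s)) * |Real.cos T + s * Real.sin T|
        ≤ Real.exp (-(T*s)) * (1+s) := by
          exact mul_le_mul_of_nonneg_left h1 (Real.exp_pos _).le
      _ ≤ 2 * Real.exp (-(T*s)) * (1 + s^2) := by nlinarith [Real.exp_pos (-(T*s))]
  have hexp_int : ∀ T : ℝ, 0 < T →
      Integrable (fun s => Real.exp (-(T*s))) (volume.restrict (Set.Ioi (0:ℝ))) := by
    intro T hT
    simpa [neg_mul, IntegrableOn] using exp_neg_integrableOn_Ioi 0 hT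
  have hEint : ∀ T : ℝ, 0 < T →
      Integrable (fun s => Real.exp (-(s*T)) * (Real.cos T + s * Real.sin T) / (1+s^2))
        (volume.restrict (Set.Ioi (0:ℝ))) := by
    intro T hT
    refine ((hexp_int T hT).const_mul 2).mono' ?_ ?_
    · apply Continuous.aestronglyMeasurable
      apply Continuous.div
      · exact ((Real.continuous_exp.comp (by continuity)).mul (by continuity))
      · continuity
      · intro s; positivity
    · rw [ae_restrict_iff' measurableSet_Ioi]
      exact Eventually.of_forall fun s hs => hbound T hT s hs
  have hEbound : ∀ T : ℝ, 0 < T → ‖E T‖ ≤ 2 / T := by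
    intro T hT
    have := norm_integral_le_of_norm_le ((hexp_int T hT).const_mul 2)
      ((ae_restrict_iff' measurableSet_Ioi).2
        (Eventually.of_forall fun s hs => hbound T hT s hs))
    calc ‖E T‖ ≤ ∫ s in Set.Ioi (0:ℝ), 2 * Real.exp (-(T*s)) := this
      _ = 2 / T := by
          rw [integral_const_mul, integral_exp_neg_mul_Ioi hT]
          ring
  have hE0 : Tendsto E atTop (nhds 0) := by
    refine squeeze_zero_norm' (a := fun T => 2 / T) ?_ ?_
    · filter_upwards [eventually_gt_atTop (0:ℝ)] with T hT
      exact hEbound T hT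
    · simpa [div_eq_mul_inv] using tendsto_inv_atTop_zero.const_mul (2:ℝ)
  have hSiE : ∀ᶠ T in atTop, (∫ t in (0:ℝ)..T, _root_.sinc t) = π/2 - E T := by
    filter_upwards [eventually_gt_atTop (0:ℝ)] with T hT
    rw [Si_eq hT.le]
    have hsplit : ∀ s : ℝ, (1 - Real.exp (-(s*T)) * (Real.cos T + s * Real.sin T)) / (1+s^2)
        = (1+s^2)⁻¹ - Real.exp (-(s*T)) * (Real.cos T + s * Real.sin T) / (1+s^2) := by
      intro s
      rw [sub_div, one_div]
    simp only [hsplit]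
    rw [integral_sub (integrable_inv_one_add_sq.integrableOn) (hEint T hT)]
    rw [integral_Ioi_inv_one_add_sq]
    simp [hE]
  refine Tendsto.congr' (EventuallyEq.symm hSiE) ?_
  have := tendsto_const_nhds (x := π/2) (f := atTop (α := ℝ)) |>.sub hE0
  simpa using this

noncomputable def Si (T : ℝ) : ℝ := ∫ t in (0:ℝ)..T, _root_.sinc t

lemma continuous_Si : Continuous Si :=
  intervalIntegral.continuous_primitive (fun a b => _root_.continuous_sinc.intervalIntegrable a b) 0

lemma sinc_neg (t : ℝ) : _root_.sinc (-t) = _root_.sinc t := by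
  rcases eq_or_ne t 0 with rfl | ht
  · simp
  · rw [sinc_of_ne ht, sinc_of_ne (neg_ne_zero.2 ht), Real.sin_neg, neg_div_neg_eq]

lemma Si_neg (T : ℝ) : Si (-T) = - Si T := by
  have : Si (-T) = ∫ t in (0:ℝ)..(-T), _root_.sinc (-t) := by
    unfold Si
    congr 1
    ext t
    rw [_root_.sinc_neg]
  rw [this, intervalIntegral.integral_comp_neg (fun t => _root_.sinc t)]
  simp only [neg_neg, neg_zero]
  rw [intervalIntegral.integral_symm]
  rfl

lemma Si_bound : ∃ M : ℝ, 0 ≤ M ∧ ∀ T : ℝ, |Si T| ≤ M := by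
  obtain ⟨T₀, hT₀⟩ := (Filter.eventually_atTop).1
    (Si_tendsto.eventually (eventually_le_nhds (show π/2 < π/2 + 1 by linarith) ) |>.and
     (Si_tendsto.eventually (eventually_ge_nhds (show π/2 - 1 < π/2 by linarith))))
  set T₁ := max T₀ 0 with hT₁
  obtain ⟨C, hC⟩ := (isCompact_Icc (a := (0:ℝ)) (b := T₁)).exists_bound_of_continuousOn
    continuous_Si.continuousOn
  refine ⟨max C (|π/2| + 1), le_trans (le_max_left _ _ |>.trans' ?_) le_rfl, fun T => ?_⟩
  · calc (0:ℝ) ≤ |Si 0| := abs_nonneg _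
      _ ≤ C := by simpa using hC 0 ⟨le_rfl, le_max_right _ _⟩
  · have key : ∀ S : ℝ, 0 ≤ S → |Si S| ≤ max C (|π/2| + 1) := by
      intro S hS
      rcases le_or_gt S T₁ with h | h
      · exact le_max_of_le_left (by simpa using hC S ⟨hS, h⟩)
      · have hS' : T₀ ≤ S := le_trans (le_max_left _ _) h.le
        obtain ⟨h1, h2⟩ := hT₀ S hS'
        refine le_max_of_le_right ?_
        rw [abs_le]
        constructor
        · have h3 : -(|π/2| + 1) ≤ π/2 - 1 := by
            have := neg_abs_le (π/2); linarith
          exact h3.trans h2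
        · refine le_trans h1 ?_
          have := le_abs_self (π/2); linarith
    rcases le_or_gt 0 T with h | h
    · exact key T h
    · have := key (-T) (by linarith)
      rwa [Si_neg, abs_neg] at this

lemma step_id (x c t : ℝ) (hc : c ≠ 0) :
    x * _root_.sinc (x*t) * _root_.sinc (c*t) = (2*c)⁻¹ * ∫ u in (x-c)..(x+c), u * _root_.sinc (u*t) := by
  rcases eq_or_ne t 0 with rfl | ht
  · simp only [mul_zero, _root_.sinc_zero, mul_one]
    rw [integral_id]
    field_simp
    ring
  · have h1 : ∀ u : ℝ, u * _root_.sinc (u*t) = Real.sin (u*t) / t := fun u => mul_sinc u t ht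
    simp only [h1]
    rw [intervalIntegral.integral_div, intervalIntegral.integral_comp_mul_right
      (fun u => Real.sin u) ht, integral_sin]
    have hcos : Real.cos ((x-c)*t) - Real.cos ((x+c)*t)
        = 2 * Real.sin (x*t) * Real.sin (c*t) := by
      rw [Real.cos_sub_cos]
      have e1 : ((x-c)*t + (x+c)*t)/2 = x*t := by ring
      have e2 : ((x-c)*t - (x+c)*t)/2 = -(c*t) := by ring
      rw [e1, e2, Real.sin_neg]
      ring
    rw [sinc_of_ne (mul_ne_zero hc ht), smul_eq_mul, hcos]
    field_simp

noncomputable def phi (b : ℕ → ℝ) (m : ℕ) (x R : ℝ) : ℝ :=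
  ∫ t in (0:ℝ)..R, x * _root_.sinc (x*t) * ∏ k ∈ Finset.range m, _root_.sinc (b k * t)

lemma phi_zero (b : ℕ → ℝ) (x R : ℝ) : phi b 0 x R = Si (x*R) := by
  unfold phi Si
  simp only [Finset.range_zero, Finset.prod_empty, mul_one]
  rcases eq_or_ne x 0 with rfl | hx
  · simp
  · rw [intervalIntegral.integral_const_mul, intervalIntegral.integral_comp_mul_left
      (fun t => _root_.sinc t) hx, mul_zero, smul_eq_mul]
    field_simp

lemma phi_cont (b : ℕ → ℝ) (m : ℕ) (R : ℝ) : Continuous (fun u => phi b m u R) := by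
  apply intervalIntegral.continuous_parametric_intervalIntegral_of_continuous'
  apply Continuous.mul
  · exact continuous_fst.mul (_root_.continuous_sinc.comp (continuous_fst.mul continuous_snd))
  · exact continuous_finset_prod _ fun k _ =>
      _root_.continuous_sinc.comp (continuous_const.mul continuous_snd)

lemma phi_succ (b : ℕ → ℝ) (m : ℕ) (hc : 0 < b m) (x R : ℝ) (hR : 0 ≤ R) :
    phi b (m+1) x R
      = (2 * b m)⁻¹ * ∫ u in (x - b m)..(x + b m), phi b m u R := by
  set c := b m with hcdef
  have hpt : ∀ t : ℝ, x * _root_.sinc (x*t) * ∏ k ∈ Finset.range (m+1), _root_.sinc (b k*t)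
      = (2*c)⁻¹ * ∫ u in (x-c)..(x+c),
          u * _root_.sinc (u*t) * ∏ k ∈ Finset.range m, _root_.sinc (b k * t) := by
    intro t
    rw [Finset.prod_range_succ]
    calc x * _root_.sinc (x*t) * ((∏ k ∈ Finset.range m, _root_.sinc (b k*t)) * _root_.sinc (c*t))
        = (x * _root_.sinc (x*t) * _root_.sinc (c*t)) * ∏ k ∈ Finset.range m, _root_.sinc (b k*t) := by ring
      _ = ((2*c)⁻¹ * ∫ u in (x-c)..(x+c), u * _root_.sinc (u*t)) *
            ∏ k ∈ Finset.range m, _root_.sinc (b k*t) := by rw [step_id x c t hc.ne']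
      _ = (2*c)⁻¹ * ∫ u in (x-c)..(x+c),
            u * _root_.sinc (u*t) * ∏ k ∈ Finset.range m, _root_.sinc (b k * t) := by
          rw [intervalIntegral.integral_mul_const]
          ring
  unfold phi
  simp only [hpt]
  rw [intervalIntegral.integral_const_mul]
  congr 1
  have hab : x - c ≤ x + c := by linarith
  rw [intervalIntegral.integral_of_le hR, intervalIntegral.integral_of_le hab]
  have h1 : ∀ t : ℝ, (∫ u in (x-c)..(x+c), u * _root_.sinc (u*t) * ∏ k ∈ Finset.range m, _root_.sinc (b k * t))
      = ∫ u in Set.Ioc (x-c) (x+c), u * _root_.sinc (u*t) * ∏ k ∈ Finset.range m, _root_.sinc (b k * t) :=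
    fun t => intervalIntegral.integral_of_le hab
  have h2 : ∀ u : ℝ, (∫ t in (0:ℝ)..R, u * _root_.sinc (u*t) * ∏ k ∈ Finset.range m, _root_.sinc (b k * t))
      = ∫ t in Set.Ioc (0:ℝ) R, u * _root_.sinc (u*t) * ∏ k ∈ Finset.range m, _root_.sinc (b k * t) :=
    fun u => intervalIntegral.integral_of_le hR
  simp only [h1, h2]
  have hcont : Continuous (Function.uncurry fun (t u : ℝ) =>
      u * _root_.sinc (u*t) * ∏ k ∈ Finset.range m, _root_.sinc (b k * t)) := by
    apply Continuous.mul
    · exact continuous_snd.mul (_root_.continuous_sinc.comp (continuous_snd.mul continuous_fst))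
    · exact (continuous_finset_prod _ fun k _ =>
        _root_.continuous_sinc.comp (continuous_const.mul continuous_fst))
  have hint : Integrable (Function.uncurry fun (t u : ℝ) =>
      u * _root_.sinc (u*t) * ∏ k ∈ Finset.range m, _root_.sinc (b k * t))
      ((volume.restrict (Set.Ioc (0:ℝ) R)).prod (volume.restrict (Set.Ioc (x-c) (x+c)))) := by
    rw [Measure.prod_restrict]
    have : IntegrableOn (Function.uncurry fun (t u : ℝ) =>
        u * _root_.sinc (u*t) * ∏ k ∈ Finset.range m, _root_.sinc (b k * t))
        ((Set.Icc (0:ℝ) R) ×ˢ (Set.Icc (x-c) (x+c))) (volume.prod volume) :=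
      hcont.continuousOn.integrableOn_compact (isCompact_Icc.prod isCompact_Icc)
    rw [← Measure.volume_eq_prod] at this
    exact this.mono_set (Set.prod_mono Set.Ioc_subset_Icc_self Set.Ioc_subset_Icc_self)
  exact integral_integral_swap hint

lemma phi_le (b : ℕ → ℝ) (M : ℝ) (hM : ∀ T, |Si T| ≤ M) :
    ∀ m : ℕ, (∀ k < m, 0 < b k) → ∀ x R : ℝ, 0 ≤ R → |phi b m x R| ≤ M := by
  intro m
  induction m with
  | zero =>
    intro _ x R _
    rw [phi_zero]
    exact hM _
  | succ m ih =>
    intro hb x R hR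
    have hc : 0 < b m := hb m (Nat.lt_succ_self m)
    have hM0 : 0 ≤ M := le_trans (abs_nonneg _) (hM 0)
    rw [phi_succ b m hc x R hR, abs_mul, abs_of_pos (by positivity : (0:ℝ) < (2*b m)⁻¹)]
    have hbd : ∀ u ∈ Set.uIoc (x - b m) (x + b m), ‖phi b m u R‖ ≤ M := by
      intro u _
      rw [Real.norm_eq_abs]
      exact ih (fun k hk => hb k (hk.trans (Nat.lt_succ_self m))) u R hR
    have := intervalIntegral.norm_integral_le_of_norm_le_const hbd
    rw [Real.norm_eq_abs] at this
    calc (2*b m)⁻¹ * |∫ u in (x - b m)..(x + b m), phi b m u R|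
        ≤ (2*b m)⁻¹ * (M * |x + b m - (x - b m)|) := by
          exact mul_le_mul_of_nonneg_left this (by positivity)
      _ = M := by
          rw [show x + b m - (x - b m) = 2 * b m by ring, abs_of_pos (by positivity)]
          field_simp

lemma phi_tendsto (b : ℕ → ℝ) :
    ∀ m : ℕ, (∀ k < m, 0 < b k) → ∀ x : ℝ, 0 < x → (∑ k ∈ Finset.range m, b k) ≤ x →
      Tendsto (fun R => phi b m x R) atTop (nhds (π/2)) := by
  obtain ⟨M, hM0, hM⟩ := Si_bound
  intro m
  induction m with
  | zero =>
    intro _ x hx _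
    simp only [phi_zero]
    have hSi : Tendsto Si atTop (nhds (π/2)) := Si_tendsto
    exact hSi.comp (Tendsto.const_mul_atTop hx tendsto_id)
  | succ m ih =>
    intro hb x hx hsum
    have hc : 0 < b m := hb m (Nat.lt_succ_self m)
    have hb' : ∀ k < m, 0 < b k := fun k hk => hb k (hk.trans (Nat.lt_succ_self m))
    have hsum' : (∑ k ∈ Finset.range m, b k) ≤ x - b m := by
      rw [Finset.sum_range_succ] at hsum; linarith
    have hsum0 : 0 ≤ ∑ k ∈ Finset.range m, b k :=
      Finset.sum_nonneg fun k hk => (hb' k (Finset.mem_range.1 hk)).le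
    have key : Tendsto (fun R => ∫ u in (x - b m)..(x + b m), phi b m u R) atTop
        (nhds (∫ u in (x - b m)..(x + b m), (π/2 : ℝ))) := by
      apply intervalIntegral.tendsto_integral_filter_of_dominated_convergence
        (bound := fun _ => M)
      · exact Eventually.of_forall fun R => (phi_cont b m R).aestronglyMeasurable
      · filter_upwards [eventually_ge_atTop (0:ℝ)] with R hR
        refine Eventually.of_forall fun u _ => ?_
        rw [Real.norm_eq_abs]
        exact phi_le b M hM m hb' u R hR
      · exact intervalIntegrable_const
      · refine Eventually.of_forall fun u hu => ?_
        have hu' : u ∈ Set.Ioc (x - b m) (x + b m) := by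
          rwa [Set.uIoc_of_le (by linarith : x - b m ≤ x + b m)] at hu
        exact ih hb' u (by linarith [hu'.1]) (by linarith [hu'.1])
    have key2 := key.const_mul ((2*b m)⁻¹)
    rw [intervalIntegral.integral_const] at key2
    have heq : (fun R => (2*b m)⁻¹ * (∫ u in (x - b m)..(x + b m), phi b m u R))
        =ᶠ[atTop] fun R => phi b (m+1) x R := by
      filter_upwards [eventually_ge_atTop (0:ℝ)] with R hR
      rw [phi_succ b m hc x R hR]
    have := key2.congr' heq
    convert this using 2
    rw [smul_eq_mul, show x + b m - (x - b m) = 2 * b m by ring]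
    field_simp

lemma sum_shift (a : ℕ → ℝ) (n : ℕ) :
    ∑ k ∈ Finset.range n, a (k+1) = ∑ k ∈ Finset.Icc 1 n, a k := by
  induction n with
  | zero => simp
  | succ n ih =>
    rw [Finset.sum_range_succ, Finset.sum_Icc_succ_top (Nat.succ_le_succ (Nat.zero_le n)), ih]

lemma two_cos_sinc (x t : ℝ) (hx : x ≠ 0) :
    2 * Real.cos (x*t) * _root_.sinc (x*t) = x⁻¹ * ((2*x) * _root_.sinc ((2*x)*t)) := by
  rcases eq_or_ne t 0 with rfl | ht
  · simp only [mul_zero, _root_.sinc_zero, mul_one]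
    field_simp
    exact Real.cos_zero
  · rw [sinc_of_ne (mul_ne_zero hx ht),
      sinc_of_ne (mul_ne_zero (mul_ne_zero two_ne_zero hx) ht),
      show (2*x)*t = 2*(x*t) by ring, Real.sin_two_mul]
    field_simp

/-- If `a_0 ≥ a_1 ≥ … ≥ a_n > 0` then `ε_0 = π/(2 a_0)`, and
`ε_n = π/(2 a_0)` whenever `∑_{k=1}^n a_k ≤ 2 a_0`. -/
theorem eps_eq (n : ℕ) (a : ℕ → ℝ)
    (hpos : ∀ k ≤ n, 0 < a k)
    (hmono : ∀ k, k + 1 ≤ n → a (k + 1) ≤ a k)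
    (hsum : (∑ k ∈ Finset.Icc 1 n, a k) ≤ 2 * a 0) :
    Filter.Tendsto
      (fun R : ℝ => ∫ t in (0:ℝ)..R, 2 * Real.cos (a 0 * t) * _root_.sinc (a 0 * t))
      Filter.atTop (nhds (π / (2 * a 0))) ∧
    Filter.Tendsto
      (fun R : ℝ => ∫ t in (0:ℝ)..R,
        2 * Real.cos (a 0 * t) * ∏ k ∈ Finset.range (n + 1), _root_.sinc (a k * t))
      Filter.atTop (nhds (π / (2 * a 0))) := by
  have ha0 : 0 < a 0 := hpos 0 (Nat.zero_le n)
  set b : ℕ → ℝ := fun k => a (k+1) with hbdef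
  have key : ∀ m : ℕ, (∀ k < m, 0 < b k) → (∑ k ∈ Finset.range m, b k) ≤ 2 * a 0 →
      Filter.Tendsto
        (fun R : ℝ => ∫ t in (0:ℝ)..R,
          2 * Real.cos (a 0 * t) * ∏ k ∈ Finset.range (m + 1), _root_.sinc (a k * t))
        Filter.atTop (nhds (π / (2 * a 0))) := by
    intro m hbm hs
    have h2 : Tendsto (fun R => phi b m (2 * a 0) R) atTop (nhds (π/2)) :=
      phi_tendsto b m hbm (2 * a 0) (by positivity) hs
    have heq : ∀ R : ℝ,
        (∫ t in (0:ℝ)..R, 2 * Real.cos (a 0 * t) * ∏ k ∈ Finset.range (m + 1), _root_.sinc (a k * t))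
          = (a 0)⁻¹ * phi b m (2 * a 0) R := by
      intro R
      unfold phi
      rw [← intervalIntegral.integral_const_mul]
      apply intervalIntegral.integral_congr
      intro t _
      dsimp only
      rw [Finset.prod_range_succ']
      have := two_cos_sinc (a 0) t ha0.ne'
      calc 2 * Real.cos (a 0 * t) * ((∏ k ∈ Finset.range m, _root_.sinc (a (k+1) * t)) * _root_.sinc (a 0 * t))
          = (2 * Real.cos (a 0 * t) * _root_.sinc (a 0 * t)) * ∏ k ∈ Finset.range m, _root_.sinc (b k * t) := by
            simp only [hbdef]
            ring
        _ = ((a 0)⁻¹ * ((2 * a 0) * _root_.sinc ((2 * a 0)*t))) * ∏ k ∈ Finset.range m, _root_.sinc (b k * t) := by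
            rw [this]
        _ = (a 0)⁻¹ * (2 * a 0 * _root_.sinc (2 * a 0 * t) * ∏ k ∈ Finset.range m, _root_.sinc (b k * t)) := by
            ring
    have h3 := h2.const_mul ((a 0)⁻¹)
    have h4 : (a 0)⁻¹ * (π/2) = π / (2 * a 0) := by
      rw [inv_mul_eq_div, div_div, mul_comm]
    rw [h4] at h3
    exact Tendsto.congr (fun R => (heq R).symm) h3
  have hb : ∀ k < n, 0 < b k := fun k hk => hpos (k+1) (Nat.succ_le_of_lt hk)
  have hsum' : (∑ k ∈ Finset.range n, b k) ≤ 2 * a 0 := by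
    refine le_trans (le_of_eq ?_) hsum
    simp only [hbdef]
    exact sum_shift a n
  constructor
  · have := key 0 (by intro k hk; omega) (by simp; positivity)
    simpa using this
  · exact key n hb hsum'
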